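/- For a probability measure q on ℝ^d, a probability measure p on ℝ^d, a nonnegative measurable distortion ρ, and β > 0, the function G_q(β) = ∫ [(∫ e^{-βρ(x,y)} ρ(x,y) dq(y)) / (∫ e^{-βρ(x,y)} dq(y))] dp(x) - D is strictly decreasing in β, provided that for p-almost every x, ρ(x,·) is not q-almost-everywhere constant. Its derivative equals minus the p-average of the conditional variance of ρ(x,Y) under the tilted measure, which is strictly negative by the Cauchy–Schwarz inequality. -/

import Mathlib

open MeasureTheory

lemma aux_s_exp (s : ℝ) (hs : 0 ≤ s) : s * Real.exp (-s) ≤ 1 := by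
  have h1 : s ≤ Real.exp s := (le_add_of_nonneg_left zero_le_one).trans (by linarith [Real.add_one_le_exp s])
  have h2 : Real.exp (-s) = 1 / Real.exp s := by
    rw [Real.exp_neg]; ring
  rw [h2]
  rw [mul_one_div, div_le_one (Real.exp_pos s)]
  exact h1

lemma aux_var_pos {Y : Type*} [MeasurableSpace Y] (q : Measure Y) [IsProbabilityMeasure q]
    (f : Y → ℝ) (hf : Measurable f) (hf0 : ∀ y, 0 ≤ f y) (β : ℝ) (hβ : 0 < β)
    (hnc : ¬ ∃ c : ℝ, ∀ᵐ y ∂q, f y = c) :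
    0 < ((∫ y, Real.exp (-β * f y) ∂q) * (∫ y, Real.exp (-β * f y) * f y ^ 2 ∂q)
          - (∫ y, Real.exp (-β * f y) * f y ∂q) ^ 2)
        / (∫ y, Real.exp (-β * f y) ∂q) ^ 2 := by
  set w : Y → ℝ := fun y => Real.exp (-β * f y) with hw
  have hwpos : ∀ y, 0 < w y := fun y => Real.exp_pos _
  have hwle : ∀ y, w y ≤ 1 := fun y => Real.exp_le_one_iff.2 (by nlinarith [hf0 y])
  have hwm : Measurable w := (hf.const_mul (-β)).exp
  have hIw : Integrable w q := by
    refine (integrable_const (1:ℝ)).mono' hwm.aestronglyMeasurable ?_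
    filter_upwards with y
    rw [Real.norm_eq_abs, abs_of_pos (hwpos y)]; exact hwle y
  have hsexp : ∀ y, w y * f y ≤ 1 / β := by
    intro y
    have := aux_s_exp (β * f y) (mul_nonneg hβ.le (hf0 y))
    rw [le_div_iff₀ hβ]
    calc w y * f y * β = (β * f y) * Real.exp (-(β * f y)) := by
          simp only [hw, neg_mul]; ring
      _ ≤ 1 := this
  have hIwf : Integrable (fun y => w y * f y) q := by
    refine (integrable_const (1/β)).mono' (hwm.mul hf).aestronglyMeasurable ?_
    filter_upwards with y
    rw [Real.norm_eq_abs, abs_of_nonneg (mul_nonneg (hwpos y).le (hf0 y))]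
    exact hsexp y
  have hsexp2 : ∀ y, w y * f y ^ 2 ≤ 4 / β ^ 2 := by
    intro y
    have h := aux_s_exp (β * f y / 2) (by have := hf0 y; positivity)
    have hb : 0 ≤ β * f y / 2 * Real.exp (-(β * f y / 2)) :=
      mul_nonneg (by have := hf0 y; positivity) (Real.exp_pos _).le
    have hsq : (β * f y / 2 * Real.exp (-(β * f y / 2))) ^ 2 ≤ 1 := by
      nlinarith [hb, h]
    have hee : Real.exp (-(β * f y / 2)) ^ 2 = w y := by
      rw [← Real.exp_nat_mul]
      simp only [hw]
      ring_nf
    rw [le_div_iff₀ (by positivity)]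
    calc w y * f y ^ 2 * β ^ 2
        = 4 * ((β * f y / 2) ^ 2 * (Real.exp (-(β * f y / 2)) ^ 2)) := by rw [hee]; ring
      _ = 4 * (β * f y / 2 * Real.exp (-(β * f y / 2))) ^ 2 := by ring
      _ ≤ 4 * 1 := by nlinarith
      _ = 4 := by ring
  have hIwf2 : Integrable (fun y => w y * f y ^ 2) q := by
    refine (integrable_const (4/β^2)).mono' (hwm.mul (hf.pow_const 2)).aestronglyMeasurable ?_
    filter_upwards with y
    rw [Real.norm_eq_abs, abs_of_nonneg (mul_nonneg (hwpos y).le (sq_nonneg _))]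
    exact hsexp2 y
  set Z := ∫ y, w y ∂q with hZdef
  set M1 := ∫ y, w y * f y ∂q with hM1def
  set M2 := ∫ y, w y * f y ^ 2 ∂q with hM2def
  have hZpos : 0 < Z := by
    rw [hZdef, integral_pos_iff_support_of_nonneg (fun y => (hwpos y).le) hIw]
    have : Function.support w = Set.univ := by
      ext y; simp [Function.mem_support, (hwpos y).ne']
    rw [this]
    simp
  set m := M1 / Z with hmdef
  set g : Y → ℝ := fun y => w y * (f y - m) ^ 2 with hg
  have hgeq : g = fun y => w y * f y ^ 2 - (2*m) * (w y * f y) + m^2 * w y := by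
    funext y; simp only [hg]; ring
  have hIg : Integrable g q := by
    rw [hgeq]; exact (hIwf2.sub (hIwf.const_mul _)).add (hIw.const_mul _)
  have h_int_g : ∫ y, g y ∂q = M2 - 2*m*M1 + m^2*Z := by
    simp only [hgeq]
    have hA : Integrable (fun y => w y * f y ^ 2 - 2 * m * (w y * f y)) q :=
      hIwf2.sub (hIwf.const_mul _)
    have hB : Integrable (fun y => m ^ 2 * w y) q := hIw.const_mul _
    have hC : Integrable (fun y => 2 * m * (w y * f y)) q := hIwf.const_mul _
    rw [integral_add hA hB, integral_sub hIwf2 hC, integral_const_mul, integral_const_mul]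
  have hgpos : 0 < ∫ y, g y ∂q := by
    rw [integral_pos_iff_support_of_nonneg
      (fun y => mul_nonneg (hwpos y).le (sq_nonneg _)) hIg]
    by_contra h
    push_neg at h
    have h0 : q (Function.support g) = 0 := le_antisymm h zero_le
    have hset : {y | ¬ g y = 0} = Function.support g := by
      ext y; simp [Function.mem_support]
    have hae : ∀ᵐ y ∂q, g y = 0 := by
      rw [ae_iff, hset]; exact h0
    apply hnc
    refine ⟨m, ?_⟩
    filter_upwards [hae] with y hy
    have hy' : w y * (f y - m) ^ 2 = 0 := hy
    rcases mul_eq_zero.1 hy' with h1 | h1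
    · exact absurd h1 (hwpos y).ne'
    · have h2 : f y - m = 0 := pow_eq_zero_iff two_ne_zero |>.1 h1
      linarith
  have hnum : Z * M2 - M1 ^ 2 = Z * ∫ y, g y ∂q := by
    rw [h_int_g, hmdef]
    field_simp
    ring
  show 0 < (Z * M2 - M1 ^ 2) / Z ^ 2
  rw [hnum]
  positivity

theorem constraint_function_strictAnti {X Y : Type*} [MeasurableSpace X] [MeasurableSpace Y]
    (q : Measure Y) (p : Measure X) [IsProbabilityMeasure q] [IsProbabilityMeasure p]
    (ρ : X × Y → ℝ) (hρm : Measurable ρ) (hρ0 : ∀ z, 0 ≤ ρ z) (D : ℝ)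
    (G : ℝ → ℝ)
    (hG : ∀ β, G β = (∫ x, (∫ y, Real.exp (-β * ρ (x, y)) * ρ (x, y) ∂q)
        / (∫ y, Real.exp (-β * ρ (x, y)) ∂q) ∂p) - D)
    (V : X → ℝ → ℝ)
    (hV : ∀ x β, V x β =
      ((∫ y, Real.exp (-β * ρ (x, y)) ∂q) * (∫ y, Real.exp (-β * ρ (x, y)) * ρ (x, y) ^ 2 ∂q)
          - (∫ y, Real.exp (-β * ρ (x, y)) * ρ (x, y) ∂q) ^ 2)
        / (∫ y, Real.exp (-β * ρ (x, y)) ∂q) ^ 2)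
    -- differentiation under the integral sign is assumed valid
    (hderiv : ∀ β > 0, HasDerivAt G (-∫ x, V x β ∂p) β)
    -- all integrals are assumed finite
    (hint : ∀ β > 0, Integrable (fun x => V x β) p)
    -- non-degeneracy: for `p`-a.e. `x`, `ρ(x,·)` is not `q`-a.e. constant
    (hnc : ∀ᵐ x ∂p, ¬ ∃ c : ℝ, ∀ᵐ y ∂q, ρ (x, y) = c) :
    StrictAntiOn G (Set.Ioi 0) ∧ ∀ β > 0, (-∫ x, V x β ∂p) < 0 := by
  have key : ∀ β > 0, (-∫ x, V x β ∂p) < 0 := by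
    intro β hβ
    have haeV : ∀ᵐ x ∂p, 0 < V x β := by
      filter_upwards [hnc] with x hx
      rw [hV]
      exact aux_var_pos q (fun y => ρ (x, y)) (hρm.comp measurable_prodMk_left)
        (fun y => hρ0 _) β hβ hx
    have : 0 < ∫ x, V x β ∂p := by
      rw [integral_pos_iff_support_of_nonneg_ae
        (haeV.mono fun x hx => hx.le) (hint β hβ)]
      by_contra h
      push_neg at h
      have h0 : p (Function.support fun x => V x β) = 0 := le_antisymm h zero_le
      have hset : {x | ¬ V x β = 0} = Function.support fun x => V x β := by
        ext x; simp [Function.mem_support]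
      have hae : ∀ᵐ x ∂p, V x β = 0 := by
        rw [ae_iff, hset]; exact h0
      have hfalse : ∀ᵐ x ∂p, False := by
        filter_upwards [haeV, hae] with x h1 h2
        linarith
      exact hfalse.exists.choose_spec
    linarith
  refine ⟨?_, key⟩
  apply strictAntiOn_of_deriv_neg (convex_Ioi 0)
  · intro β hβ
    exact ((hderiv β hβ).differentiableAt.continuousAt).continuousWithinAt
  · intro β hβ
    rw [interior_Ioi] at hβ
    rw [(hderiv β hβ).deriv]
    exact key β hβ
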